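/- arXiv:1606.03525 — 4 statements merged into one kernel-verified Lean document; each statement's English description precedes it below -/
import Mathlib

section
/- For every a > 0 and every θ ∈ [0, 2π], the series ∑_{n=1}^∞ cos(nθ)/(n² + a²) converges and equals π·cosh((π − θ)a)/(2a·sinh(πa)) − 1/(2a²). -/
open Real

noncomputable section

namespace Stmt2Aux

open Complex MeasureTheory Set intervalIntegral

/-- The Fourier coefficient (real-valued) of `x ↦ cosh ((π - x) a)` on `[0, 2π]`. -/
def coef (a : ℝ) (n : ℤ) : ℝ :=
  a * Real.sinh (Real.pi * a) / (Real.pi * ((n : ℝ) ^ 2 + a ^ 2))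

lemma integrand_eq (a : ℝ) (n : ℤ) (x : ℝ) :
    @fourier (0 + 2 * Real.pi - 0) (-n) (x : AddCircle (0 + 2 * Real.pi - 0)) •
        ((Real.cosh ((Real.pi - x) * a) : ℝ) : ℂ) =
      (Real.exp (Real.pi * a) : ℂ) / 2 * Complex.exp ((-(a : ℂ) - n * Complex.I) * x) +
        (Real.exp (-(Real.pi * a)) : ℂ) / 2 * Complex.exp (((a : ℂ) - n * Complex.I) * x) := by
  have hpi : (Real.pi : ℂ) ≠ 0 := Complex.ofReal_ne_zero.mpr Real.pi_ne_zero
  rw [fourier_coe_apply, smul_eq_mul, Real.cosh_eq]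
  push_cast
  rw [div_mul_eq_mul_div, div_mul_eq_mul_div, ← Complex.exp_add, ← Complex.exp_add]
  rw [← mul_div_assoc, mul_add, add_div, ← Complex.exp_add, ← Complex.exp_add]
  congr 2
  · congr 1
    field_simp
    ring
  · congr 1
    field_simp
    ring


lemma c1_ne (a : ℝ) (ha : 0 < a) (n : ℤ) : (-(a : ℂ) - n * Complex.I) ≠ 0 := by
  intro h
  have := congrArg Complex.re h
  simp at this
  exact ha.ne' this

lemma c2_ne (a : ℝ) (ha : 0 < a) (n : ℤ) : ((a : ℂ) - n * Complex.I) ≠ 0 := by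
  intro h
  have := congrArg Complex.re h
  simp at this
  exact ha.ne' this

lemma coeff_eq (a : ℝ) (ha : 0 < a) (n : ℤ) :
    fourierCoeffOn (lt_add_of_pos_right 0 Real.two_pi_pos)
        (fun x => ((Real.cosh ((Real.pi - x) * a) : ℝ) : ℂ)) n = ((coef a n : ℝ) : ℂ) := by
  have hpi : (Real.pi : ℂ) ≠ 0 := Complex.ofReal_ne_zero.mpr Real.pi_ne_zero
  have h1 := c1_ne a ha n
  have h2 := c2_ne a ha n
  have i1 : IntervalIntegrable
      (fun x : ℝ => (Real.exp (Real.pi * a) : ℂ) / 2 *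
        Complex.exp ((-(a : ℂ) - n * Complex.I) * x)) MeasureTheory.volume 0 (0 + 2 * Real.pi) :=
    Continuous.intervalIntegrable (by fun_prop) _ _
  have i2 : IntervalIntegrable
      (fun x : ℝ => (Real.exp (-(Real.pi * a)) : ℂ) / 2 *
        Complex.exp (((a : ℂ) - n * Complex.I) * x)) MeasureTheory.volume 0 (0 + 2 * Real.pi) :=
    Continuous.intervalIntegrable (by fun_prop) _ _
  rw [fourierCoeffOn_eq_integral]
  simp_rw [integrand_eq a n]
  rw [intervalIntegral.integral_add i1 i2,
    intervalIntegral.integral_const_mul, intervalIntegral.integral_const_mul,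
    integral_exp_mul_complex h1, integral_exp_mul_complex h2]
  have e1 : Complex.exp ((-(a : ℂ) - n * Complex.I) * (((0 : ℝ) + 2 * Real.pi : ℝ) : ℂ)) =
      (Real.exp (-(2 * Real.pi * a)) : ℂ) := by
    have : (-(a : ℂ) - n * Complex.I) * (((0 : ℝ) + 2 * Real.pi : ℝ) : ℂ) =
        ((-(2 * Real.pi * a) : ℝ) : ℂ) + (-n : ℤ) * (2 * Real.pi * Complex.I) := by
      push_cast; ring
    rw [this, Complex.exp_add, Complex.exp_int_mul_two_pi_mul_I, mul_one, Complex.ofReal_exp]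
  have e2 : Complex.exp (((a : ℂ) - n * Complex.I) * (((0 : ℝ) + 2 * Real.pi : ℝ) : ℂ)) =
      (Real.exp (2 * Real.pi * a) : ℂ) := by
    have : ((a : ℂ) - n * Complex.I) * (((0 : ℝ) + 2 * Real.pi : ℝ) : ℂ) =
        ((2 * Real.pi * a : ℝ) : ℂ) + (-n : ℤ) * (2 * Real.pi * Complex.I) := by
      push_cast; ring
    rw [this, Complex.exp_add, Complex.exp_int_mul_two_pi_mul_I, mul_one, Complex.ofReal_exp]
  rw [e1, e2]
  simp only [Complex.ofReal_zero, mul_zero, Complex.exp_zero]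
  rw [Complex.real_smul, coef]
  push_cast
  set E : ℂ := Complex.exp ((Real.pi : ℂ) * a) with hE
  have hEne : E ≠ 0 := Complex.exp_ne_zero _
  have hna : ((n : ℂ) ^ 2 + (a : ℂ) ^ 2) ≠ 0 := by
    intro h
    have hre : ((n : ℂ) ^ 2 + (a : ℂ) ^ 2).re = 0 := by rw [h]; rfl
    have : (n : ℝ) ^ 2 + a ^ 2 = 0 := by
      simpa [Complex.add_re, pow_two, Complex.mul_re] using hre
    nlinarith [sq_nonneg (n : ℝ)]
  have hS : Complex.sinh ((Real.pi : ℂ) * a) = (E - E⁻¹) / 2 := by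
    rw [Complex.sinh, Complex.exp_neg, hE]
  have hE2 : Complex.exp (-((Real.pi : ℂ) * a)) = E⁻¹ := by rw [Complex.exp_neg, hE]
  have hE3 : Complex.exp (-(2 * (Real.pi : ℂ) * a)) = (E * E)⁻¹ := by
    rw [hE, ← Complex.exp_add, ← Complex.exp_neg]
    congr 1; ring
  have hE4 : Complex.exp (2 * (Real.pi : ℂ) * a) = E * E := by
    rw [hE, ← Complex.exp_add]
    congr 1; ring
  have d1 : (Complex.exp (-(2 * (Real.pi : ℂ) * a)) - 1) / (-(a : ℂ) - n * Complex.I) =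
      (Complex.exp (-(2 * (Real.pi : ℂ) * a)) - 1) * (-((a : ℂ) - n * Complex.I)) /
        ((n : ℂ) ^ 2 + (a : ℂ) ^ 2) := by
    rw [div_eq_div_iff h1 hna]
    linear_combination (Complex.exp (-(2 * (Real.pi : ℂ) * a)) - 1) * (n : ℂ) ^ 2 *
      Complex.I_sq
  have d2 : (Complex.exp (2 * (Real.pi : ℂ) * a) - 1) / ((a : ℂ) - n * Complex.I) =
      (Complex.exp (2 * (Real.pi : ℂ) * a) - 1) * ((a : ℂ) + n * Complex.I) /
        ((n : ℂ) ^ 2 + (a : ℂ) ^ 2) := by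
    rw [div_eq_div_iff h2 hna]
    linear_combination (Complex.exp (2 * (Real.pi : ℂ) * a) - 1) * (n : ℂ) ^ 2 *
      Complex.I_sq
  rw [d1, d2, hS, hE2, hE3, hE4, mul_inv]
  obtain ⟨F, hF⟩ : ∃ F, E⁻¹ = F := ⟨_, rfl⟩
  have hEF : E * F = 1 := by rw [← hF]; exact mul_inv_cancel₀ hEne
  obtain ⟨D, hDd⟩ : ∃ D, (n : ℂ) ^ 2 + (a : ℂ) ^ 2 = D := ⟨_, rfl⟩
  rw [hF, hDd]
  linear_combination ((E * ((a : ℂ) + n * Complex.I) - F * ((a : ℂ) - n * Complex.I)) /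
    (4 * (Real.pi : ℂ) * D)) * hEF

lemma coef_neg (a : ℝ) (n : ℤ) : coef a (-n) = coef a n := by simp [coef]

lemma coef_summable (a : ℝ) : Summable (fun n : ℤ => coef a n) := by
  have h0 : Summable (fun n : ℕ => 1 / ((n : ℝ) ^ 2 + a ^ 2)) := by
    refine (summable_nat_add_iff 1).mp ?_
    have h1 : Summable (fun n : ℕ => 1 / ((n : ℝ) + 1) ^ 2) := by
      have := (summable_nat_add_iff (f := fun n : ℕ => 1 / (n : ℝ) ^ 2) 1).mpr
        (Real.summable_one_div_nat_pow.mpr one_lt_two)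
      simpa using this
    refine h1.of_nonneg_of_le (fun n => by positivity) (fun n => ?_)
    push_cast
    exact one_div_le_one_div_of_le (by positivity) (by nlinarith [sq_nonneg a])
  have key : Summable (fun n : ℕ => coef a n) := by
    refine (h0.mul_left (a * Real.sinh (Real.pi * a) / Real.pi)).congr (fun n => ?_)
    rw [coef, mul_one_div, div_div]
    norm_num
  exact key.of_nat_of_neg (key.congr fun n => by rw [coef_neg])

lemma hasSum_int (a : ℝ) (ha : 0 < a) {θ : ℝ} (hθ : θ ∈ Set.Ico (0 : ℝ) (2 * Real.pi)) :
    HasSum (fun n : ℤ => ((coef a n : ℝ) : ℂ) * fourier n (θ : AddCircle (2 * Real.pi)))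
      ((Real.cosh ((Real.pi - θ) * a) : ℂ)) := by
  haveI : Fact (0 < 2 * Real.pi) := ⟨Real.two_pi_pos⟩
  have hend : ((Real.cosh ((Real.pi - 0) * a) : ℝ) : ℂ) =
      ((Real.cosh ((Real.pi - 2 * Real.pi) * a) : ℝ) : ℂ) := by
    rw [show (Real.pi - 2 * Real.pi) * a = -((Real.pi - 0) * a) by ring, Real.cosh_neg]
  have hcont : Continuous (AddCircle.liftIco (2 * Real.pi) 0
      (fun x => ((Real.cosh ((Real.pi - x) * a) : ℝ) : ℂ))) :=
    AddCircle.liftIco_zero_continuous (f := fun x => ((Real.cosh ((Real.pi - x) * a) : ℝ) : ℂ))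
      hend (Continuous.continuousOn (by fun_prop))
  set F : C(AddCircle (2 * Real.pi), ℂ) := ⟨_, hcont⟩ with hF
  have hc : ∀ n : ℤ, fourierCoeff (⇑F) n = ((coef a n : ℝ) : ℂ) := fun n =>
    (fourierCoeff_liftIco_eq (T := 2 * Real.pi)
      (fun x => ((Real.cosh ((Real.pi - x) * a) : ℝ) : ℂ)) n).trans (coeff_eq a ha n)
  have hsummable : Summable (fourierCoeff (⇑F)) :=
    (Complex.summable_ofReal.mpr (coef_summable a)).congr fun n => (hc n).symm
  have H := has_pointwise_sum_fourier_series_of_summable hsummable (θ : AddCircle (2 * Real.pi))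
  simp_rw [hc, smul_eq_mul] at H
  have hFθ : F (θ : AddCircle (2 * Real.pi)) = ((Real.cosh ((Real.pi - θ) * a) : ℝ) : ℂ) := by
    simp only [hF, ContinuousMap.coe_mk]
    exact AddCircle.liftIco_coe_apply (by simpa using hθ)
  rwa [hFθ] at H

lemma exp_add_exp_neg_mul_I (y : ℝ) :
    Complex.exp ((y : ℂ) * Complex.I) + Complex.exp (-(y : ℂ) * Complex.I) =
      2 * (Real.cos y : ℂ) := by
  rw [Complex.exp_mul_I, Complex.exp_mul_I, Complex.cos_neg, Complex.sin_neg, Complex.ofReal_cos]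
  ring

lemma fourier_add_fourier_neg (m : ℤ) {θ : ℝ} :
    fourier m (θ : AddCircle (2 * Real.pi)) + fourier (-m) (θ : AddCircle (2 * Real.pi)) =
      2 * (Real.cos (m * θ) : ℂ) := by
  have hpi : (Real.pi : ℂ) ≠ 0 := Complex.ofReal_ne_zero.mpr Real.pi_ne_zero
  rw [fourier_coe_apply, fourier_coe_apply, ← exp_add_exp_neg_mul_I (m * θ)]
  congr 1
  · congr 1
    push_cast
    field_simp
  · congr 1
    push_cast
    field_simp

lemma key (a θ : ℝ) (ha : 0 < a) (hθ : θ ∈ Set.Ico (0 : ℝ) (2 * Real.pi)) :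
    HasSum (fun n : ℕ => Real.cos ((n + 1 : ℕ) * θ) / (((n + 1 : ℕ) : ℝ) ^ 2 + a ^ 2))
      (Real.pi * Real.cosh ((Real.pi - θ) * a) / (2 * a * Real.sinh (Real.pi * a)) -
        1 / (2 * a ^ 2)) := by
  have hS : Real.sinh (Real.pi * a) ≠ 0 := ne_of_gt (Real.sinh_pos_iff.mpr (by positivity))
  have hπ : Real.pi ≠ 0 := Real.pi_ne_zero
  set g : ℤ → ℂ := fun n => ((coef a n : ℝ) : ℂ) * fourier n (θ : AddCircle (2 * Real.pi))
    with hg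
  have hg0 : g 0 = ((coef a 0 : ℝ) : ℂ) := by
    rw [hg]
    simp only []
    rw [fourier_zero, mul_one]
  have H := (hasSum_int a ha hθ).nat_add_neg
  have H2 : HasSum (fun n : ℕ => g ((n + 1 : ℕ)) + g (-((n + 1 : ℕ) : ℤ)))
      (((Real.cosh ((Real.pi - θ) * a) : ℝ) : ℂ) - g 0) := by
    refine (hasSum_nat_add_iff (f := fun n : ℕ => g n + g (-(n : ℤ))) 1).mpr ?_
    rw [Finset.sum_range_one]
    convert H using 1
    · rfl
    norm_num
    exact hg0
  have H3 := H2.mul_left ((Real.pi / (2 * a * Real.sinh (Real.pi * a)) : ℝ) : ℂ)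
  have hac : (a : ℂ) ≠ 0 := Complex.ofReal_ne_zero.mpr ha.ne'
  have hπc : (Real.pi : ℂ) ≠ 0 := Complex.ofReal_ne_zero.mpr hπ
  have hSc : Complex.sinh ((Real.pi : ℂ) * a) ≠ 0 := by
    rw [show ((Real.pi : ℂ) * a) = ((Real.pi * a : ℝ) : ℂ) by push_cast; ring,
      ← Complex.ofReal_sinh]
    exact Complex.ofReal_ne_zero.mpr hS
  refine Complex.hasSum_ofReal.mp ?_
  convert H3 using 1
  · rfl
  · funext n
    have hd : ((n : ℂ) + 1) ^ 2 + (a : ℂ) ^ 2 ≠ 0 := by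
      have h' : (((n : ℝ) + 1) ^ 2 + a ^ 2 : ℝ) ≠ 0 := by positivity
      exact_mod_cast h'
    rw [hg]
    simp only []
    rw [coef_neg, ← mul_add, fourier_add_fourier_neg ((n + 1 : ℕ) : ℤ), coef]
    push_cast
    field_simp
    rw [mul_div_assoc, div_self (by rwa [mul_comm] at hSc), mul_one]
  · rw [hg0, coef]
    push_cast
    field_simp
    ring

end Stmt2Aux

end

theorem stmt_2 (a θ : ℝ) (ha : 0 < a) (hθ₀ : 0 ≤ θ) (hθ₁ : θ ≤ 2 * π) :
    HasSum (fun n : ℕ => Real.cos ((n + 1 : ℕ) * θ) / (((n + 1 : ℕ) : ℝ) ^ 2 + a ^ 2))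
      (π * Real.cosh ((π - θ) * a) / (2 * a * Real.sinh (π * a)) - 1 / (2 * a ^ 2)) := by
  rcases lt_or_eq_of_le hθ₁ with h | h
  · exact Stmt2Aux.key a θ ha ⟨hθ₀, h⟩
  · subst h
    have K := Stmt2Aux.key a 0 ha ⟨le_refl 0, Real.two_pi_pos⟩
    have h1 : (fun n : ℕ => Real.cos ((n + 1 : ℕ) * (2 * π)) /
          (((n + 1 : ℕ) : ℝ) ^ 2 + a ^ 2)) =
        (fun n : ℕ => Real.cos ((n + 1 : ℕ) * (0 : ℝ)) / (((n + 1 : ℕ) : ℝ) ^ 2 + a ^ 2)) := by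
      funext n
      rw [mul_zero, Real.cos_zero, Real.cos_nat_mul_two_pi]
    rw [h1, show (π - 2 * π) * a = -((π - 0) * a) by ring, Real.cosh_neg]
    exact K
end

section
/- Let b : [0, π]² → ℝ be a positive semidefinite kernel with |b(φ₁, φ₂)| < 1 for all φ₁, φ₂. Then for every natural number p ≥ 1, the pointwise power kernel (φ₁, φ₂) ↦ (b(φ₁, φ₂))^p is positive semidefinite, and the kernel C((φ₁, θ₁), (φ₂, θ₂)) = (1 − b(φ₁,φ₂)²)/(1 − 2·b(φ₁,φ₂)·cos(θ₁ − θ₂) + b(φ₁,φ₂)²) is positive semidefinite on ([0, π] × ℝ)². -/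
open Real Finset

lemma quad_factor {l : ℕ} (M : Fin l → Fin l → ℝ)
    (hsym : ∀ i j, M i j = M j i)
    (h : ∀ c : Fin l → ℝ, 0 ≤ ∑ i, ∑ j, c i * c j * M i j) :
    ∃ X : Fin l → Fin l → ℝ, ∀ i j, M i j = ∑ k, X k i * X k j := by
  have hpsd : (Matrix.of M).PosSemidef := by
    rw [Matrix.posSemidef_iff_dotProduct_mulVec]
    constructor
    · ext i j
      simpa [Matrix.conjTranspose_apply] using hsym j i
    · intro x
      have h2 := h x
      simp only [dotProduct, Matrix.mulVec, Matrix.of_apply, RCLike.star_def, star_trivial]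
      calc (0:ℝ) ≤ ∑ i, ∑ j, x i * x j * M i j := h2
        _ = ∑ i, x i * ∑ j, M i j * x j := by
            refine Finset.sum_congr rfl fun i _ => ?_
            rw [Finset.mul_sum]
            exact Finset.sum_congr rfl fun j _ => by ring
  obtain ⟨B, hB⟩ : ∃ B : Matrix (Fin l) (Fin l) ℝ, Matrix.of M = B.conjTranspose * B := by
    open scoped MatrixOrder in exact CStarAlgebra.nonneg_iff_eq_star_mul_self.mp (Matrix.nonneg_iff_posSemidef.mpr hpsd)
  refine ⟨fun k i => B k i, fun i j => ?_⟩
  have h3 := congrFun (congrFun hB i) j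
  simpa [Matrix.mul_apply, Matrix.conjTranspose_apply] using h3

lemma quad_schur {l : ℕ} (M N : Fin l → Fin l → ℝ)
    (hsM : ∀ i j, M i j = M j i) (hqM : ∀ c : Fin l → ℝ, 0 ≤ ∑ i, ∑ j, c i * c j * M i j)
    (hsN : ∀ i j, N i j = N j i) (hqN : ∀ c : Fin l → ℝ, 0 ≤ ∑ i, ∑ j, c i * c j * N i j)
    (c : Fin l → ℝ) : 0 ≤ ∑ i, ∑ j, c i * c j * (M i j * N i j) := by
  obtain ⟨X, hX⟩ := quad_factor M hsM hqM
  obtain ⟨Y, hY⟩ := quad_factor N hsN hqN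
  have key : (∑ i, ∑ j, c i * c j * (M i j * N i j))
      = ∑ p : Fin l × Fin l, ∑ q : Fin l × Fin l,
          (c p.1 * X q.1 p.1 * Y q.2 p.1) * (c p.2 * X q.1 p.2 * Y q.2 p.2) := by
    rw [Fintype.sum_prod_type]
    refine Finset.sum_congr rfl fun i _ => ?_
    refine Finset.sum_congr rfl fun j _ => ?_
    rw [Fintype.sum_prod_type, hX, hY, Finset.sum_mul_sum, Finset.mul_sum]
    refine Finset.sum_congr rfl fun k _ => ?_
    rw [Finset.mul_sum]
    exact Finset.sum_congr rfl fun m _ => by ring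
  rw [key, Finset.sum_comm]
  refine Finset.sum_nonneg fun q _ => ?_
  have e2 : (∑ p : Fin l × Fin l, (c p.1 * X q.1 p.1 * Y q.2 p.1) * (c p.2 * X q.1 p.2 * Y q.2 p.2))
      = (∑ i, c i * X q.1 i * Y q.2 i) * (∑ i, c i * X q.1 i * Y q.2 i) := by
    rw [Finset.sum_mul_sum, Fintype.sum_prod_type]
  rw [e2]
  exact mul_self_nonneg _

lemma cos_quad {l : ℕ} (θ : Fin l → ℝ) (c : Fin l → ℝ) :
    0 ≤ ∑ i, ∑ j, c i * c j * Real.cos (θ i - θ j) := by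
  have key : (∑ i, ∑ j, c i * c j * Real.cos (θ i - θ j))
      = (∑ i, c i * Real.cos (θ i)) * (∑ j, c j * Real.cos (θ j))
        + (∑ i, c i * Real.sin (θ i)) * (∑ j, c j * Real.sin (θ j)) := by
    rw [Finset.sum_mul_sum, Finset.sum_mul_sum, ← Finset.sum_add_distrib]
    refine Finset.sum_congr rfl fun i _ => ?_
    rw [← Finset.sum_add_distrib]
    refine Finset.sum_congr rfl fun j _ => ?_
    rw [Real.cos_sub]; ring
  rw [key]
  exact add_nonneg (mul_self_nonneg _) (mul_self_nonneg _)

lemma poisson_hasSum {β t : ℝ} (hβ : |β| < 1) :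
    HasSum (fun n : ℕ => (if n = 0 then (1:ℝ) else 2) * β ^ n * Real.cos (n * t))
      ((1 - β ^ 2) / (1 - 2 * β * Real.cos t + β ^ 2)) := by
  set z : ℂ := (β : ℂ) * Complex.exp ((t : ℂ) * Complex.I) with hzdef
  have hz : ‖z‖ < 1 := by
    rw [hzdef, norm_mul]
    simp only [Complex.norm_exp_ofReal_mul_I, mul_one, Complex.norm_real, Real.norm_eq_abs]
    exact hβ
  have hgeo := hasSum_geometric_of_norm_lt_one hz
  have hre := Complex.reCLM.hasSum hgeo
  have hzn : ∀ n : ℕ, ((z ^ n : ℂ)).re = β ^ n * Real.cos (n * t) := by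
    intro n
    have h5 : z ^ n = ((β ^ n : ℝ) : ℂ) * Complex.exp (((n * t : ℝ) : ℂ) * Complex.I) := by
      rw [hzdef, mul_pow, ← Complex.exp_nat_mul]
      push_cast
      ring_nf
    rw [h5, Complex.re_ofReal_mul, Complex.exp_ofReal_mul_I_re]
  have hD : 0 < 1 - 2 * β * Real.cos t + β ^ 2 := by
    have h1 : |β * Real.cos t| ≤ |β| := by
      rw [abs_mul]
      exact mul_le_of_le_one_right (abs_nonneg _) (abs_cos_le_one t)
    have h2 := abs_lt.mp hβ
    have h3 := abs_le.mp h1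
    nlinarith [sq_nonneg (1 - |β|), sq_abs β]
  have hre_val : ((1 - z)⁻¹).re = (1 - β * Real.cos t) / (1 - 2 * β * Real.cos t + β ^ 2) := by
    rw [Complex.inv_re]
    congr 1
    · simp [hzdef, Complex.sub_re, Complex.mul_re, Complex.exp_ofReal_mul_I_re]
    · rw [Complex.normSq_apply]
      have e1 : (1 - z).re = 1 - β * Real.cos t := by
        simp [hzdef, Complex.sub_re, Complex.mul_re, Complex.exp_ofReal_mul_I_re]
      have e2 : (1 - z).im = -(β * Real.sin t) := by
        simp [hzdef, Complex.sub_im, Complex.mul_im, Complex.exp_ofReal_mul_I_im,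
          Complex.exp_ofReal_mul_I_re]
      rw [e1, e2]
      have := Real.sin_sq_add_cos_sq t
      nlinarith [this]
  have hre' : HasSum (fun n : ℕ => β ^ n * Real.cos (n * t))
      ((1 - β * Real.cos t) / (1 - 2 * β * Real.cos t + β ^ 2)) := by
    rw [← hre_val]
    simpa only [Complex.reCLM_apply, hzn] using hre
  have hind : HasSum (fun n : ℕ => if n = 0 then (1:ℝ) else 0) 1 := hasSum_ite_eq 0 1
  have hfin := (hre'.mul_left 2).sub hind
  have hfun : (fun n : ℕ => 2 * (β ^ n * Real.cos (n * t)) - (if n = 0 then (1:ℝ) else 0))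
      = fun n : ℕ => (if n = 0 then (1:ℝ) else 2) * β ^ n * Real.cos (n * t) := by
    funext n
    rcases eq_or_ne n 0 with h | h <;> simp [h] <;> ring
  have hval : 2 * ((1 - β * Real.cos t) / (1 - 2 * β * Real.cos t + β ^ 2)) - 1
      = (1 - β ^ 2) / (1 - 2 * β * Real.cos t + β ^ 2) := by
    field_simp
    ring
  rw [hfun, hval] at hfin
  exact hfin

theorem stmt_11 (b : ℝ → ℝ → ℝ)
    (hsymm : ∀ φ₁ ∈ Set.Icc (0:ℝ) π, ∀ φ₂ ∈ Set.Icc (0:ℝ) π, b φ₁ φ₂ = b φ₂ φ₁)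
    (hpsd : ∀ l : ℕ, ∀ φ c : ℕ → ℝ, (∀ i, φ i ∈ Set.Icc (0:ℝ) π) →
      0 ≤ ∑ i ∈ Finset.range l, ∑ j ∈ Finset.range l, c i * c j * b (φ i) (φ j))
    (hlt : ∀ φ₁ ∈ Set.Icc (0:ℝ) π, ∀ φ₂ ∈ Set.Icc (0:ℝ) π, |b φ₁ φ₂| < 1) :
    (∀ p : ℕ, 1 ≤ p → ∀ l : ℕ, ∀ φ c : ℕ → ℝ, (∀ i, φ i ∈ Set.Icc (0:ℝ) π) →
      0 ≤ ∑ i ∈ Finset.range l, ∑ j ∈ Finset.range l, c i * c j * (b (φ i) (φ j)) ^ p) ∧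
    (∀ l : ℕ, ∀ φ θ a : ℕ → ℝ, (∀ i, φ i ∈ Set.Icc (0:ℝ) π) →
      0 ≤ ∑ i ∈ Finset.range l, ∑ j ∈ Finset.range l,
        a i * a j * ((1 - (b (φ i) (φ j)) ^ 2) /
          (1 - 2 * b (φ i) (φ j) * Real.cos (θ i - θ j) + (b (φ i) (φ j)) ^ 2))) := by
  -- base PSD at Fin level
  have hM : ∀ (l : ℕ) (φ : ℕ → ℝ), (∀ i, φ i ∈ Set.Icc (0:ℝ) π) →
      ∀ x : Fin l → ℝ, 0 ≤ ∑ i, ∑ j, x i * x j * b (φ i) (φ j) := by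
    intro l φ hφ x
    have h := hpsd l φ (fun n => if h : n < l then x ⟨n, h⟩ else 0) hφ
    simp only [Finset.sum_range] at h
    refine le_of_le_of_eq h (Finset.sum_congr rfl fun i _ => Finset.sum_congr rfl fun j _ => ?_)
    simp [i.isLt, j.isLt]
  -- symmetry at Fin level
  have hMs : ∀ (l : ℕ) (φ : ℕ → ℝ), (∀ i, φ i ∈ Set.Icc (0:ℝ) π) →
      ∀ i j : Fin l, b (φ i) (φ j) = b (φ j) (φ i) := by
    intro l φ hφ i j
    exact hsymm _ (hφ i) _ (hφ j)
  -- powers PSD at Fin level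
  have hMp : ∀ (l : ℕ) (φ : ℕ → ℝ), (∀ i, φ i ∈ Set.Icc (0:ℝ) π) →
      ∀ p : ℕ, 1 ≤ p → ∀ x : Fin l → ℝ, 0 ≤ ∑ i, ∑ j, x i * x j * (b (φ i) (φ j)) ^ p := by
    intro l φ hφ p hp
    induction p, hp using Nat.le_induction with
    | base => intro x; simpa using hM l φ hφ x
    | succ p hp ih =>
      intro x
      have := quad_schur (fun i j : Fin l => (b (φ i) (φ j)) ^ p)
        (fun i j : Fin l => b (φ i) (φ j))
        (fun i j => by show (b (φ i) (φ j)) ^ p = (b (φ j) (φ i)) ^ p; rw [hMs l φ hφ i j])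
        ih
        (fun i j => hMs l φ hφ i j)
        (hM l φ hφ) x
      calc (0:ℝ) ≤ ∑ i, ∑ j, x i * x j * ((b (φ i) (φ j)) ^ p * b (φ i) (φ j)) := this
        _ = ∑ i, ∑ j, x i * x j * (b (φ i) (φ j)) ^ (p + 1) := by
            refine Finset.sum_congr rfl fun i _ => Finset.sum_congr rfl fun j _ => ?_
            rw [pow_succ]
  constructor
  · intro p hp l φ c hφ
    simp only [Finset.sum_range]
    exact hMp l φ hφ p hp (fun i => c i)
  · intro l φ θ a hφ
    simp only [Finset.sum_range]
    set g : ℕ → ℝ := fun n => ∑ i : Fin l, ∑ j : Fin l,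
      (a i * a j) * ((if n = 0 then (1:ℝ) else 2) * (b (φ i) (φ j)) ^ n
        * Real.cos (n * (θ i - θ j))) with hg
    have hQ : HasSum g (∑ i : Fin l, ∑ j : Fin l,
        a i * a j * ((1 - (b (φ i) (φ j)) ^ 2) /
          (1 - 2 * b (φ i) (φ j) * Real.cos (θ i - θ j) + (b (φ i) (φ j)) ^ 2))) := by
      refine hasSum_sum fun i _ => hasSum_sum fun j _ => ?_
      exact (poisson_hasSum (hlt _ (hφ i) _ (hφ j))).mul_left (a i * a j)
    have hgn : ∀ n, 0 ≤ g n := by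
      intro n
      rcases n with _ | m
      · have e0 : g 0 = (∑ i : Fin l, a (i:ℕ)) * (∑ j : Fin l, a (j:ℕ)) := by
          rw [hg, Finset.sum_mul_sum]
          refine Finset.sum_congr rfl fun i _ => Finset.sum_congr rfl fun j _ => ?_
          simp
        rw [e0]
        exact mul_self_nonneg _
      · have hcos : ∀ x : Fin l → ℝ, 0 ≤ ∑ i, ∑ j, x i * x j *
            Real.cos ((((m+1 : ℕ) : ℝ) * θ i) - (((m+1 : ℕ) : ℝ) * θ j)) := by
          intro x
          exact cos_quad (fun i : Fin l => ((m+1 : ℕ) : ℝ) * θ i) x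
        have hcoss : ∀ i j : Fin l,
            Real.cos ((((m+1 : ℕ) : ℝ) * θ i) - (((m+1 : ℕ) : ℝ) * θ j))
            = Real.cos ((((m+1 : ℕ) : ℝ) * θ j) - (((m+1 : ℕ) : ℝ) * θ i)) := by
          intro i j
          rw [← Real.cos_neg, neg_sub]
        have hs := quad_schur (fun i j : Fin l => (b (φ i) (φ j)) ^ (m+1))
          (fun i j : Fin l => Real.cos ((((m+1 : ℕ) : ℝ) * θ i) - (((m+1 : ℕ) : ℝ) * θ j)))
          (fun i j => by
            show (b (φ i) (φ j)) ^ (m+1) = (b (φ j) (φ i)) ^ (m+1)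
            rw [hMs l φ hφ i j])
          (hMp l φ hφ (m+1) (Nat.le_add_left 1 m))
          hcoss hcos (fun i => a i)
        have e1 : g (m+1) = 2 * ∑ i : Fin l, ∑ j : Fin l, a (i:ℕ) * a (j:ℕ) *
            ((b (φ i) (φ j)) ^ (m+1) *
              Real.cos ((((m+1 : ℕ) : ℝ) * θ i) - (((m+1 : ℕ) : ℝ) * θ j))) := by
          rw [hg, Finset.mul_sum]
          refine Finset.sum_congr rfl fun i _ => ?_
          rw [Finset.mul_sum]
          refine Finset.sum_congr rfl fun j _ => ?_
          have : ((m+1 : ℕ) : ℝ) * (θ i - θ j)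
              = (((m+1 : ℕ) : ℝ) * θ i) - (((m+1 : ℕ) : ℝ) * θ j) := by ring
          simp only [Nat.succ_ne_zero, if_false, this]
          push_cast
          ring
        rw [e1]
        positivity
    have h0 : HasSum (fun _ : ℕ => (0:ℝ)) 0 := hasSum_zero
    exact hasSum_le hgn h0 hQ
end

section
/- Let b : [0, π]² → ℝ be a positive semidefinite kernel with 0 ≤ b(φ₁, φ₂) < 1 for all φ₁, φ₂ and b(φ,φ) < 1. Then the kernel C((φ₁, θ₁), (φ₂, θ₂)) = −log(1 − 2·b(φ₁, φ₂)·cos(θ₁ − θ₂) + b(φ₁, φ₂)²) on ([0, π] × ℝ)² is positive semidefinite. -/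
open Real Finset

/-- A PSD (in the quadratic-form sense) symmetric array on `range l` admits a Gram
decomposition. -/
lemma psd_decomp (l : ℕ) (M : ℕ → ℕ → ℝ)
    (hsym : ∀ i < l, ∀ j < l, M i j = M j i)
    (hpsd : ∀ c : ℕ → ℝ,
      0 ≤ ∑ i ∈ Finset.range l, ∑ j ∈ Finset.range l, c i * c j * M i j) :
    ∃ A : ℕ → ℕ → ℝ, ∀ i < l, ∀ j < l,
      M i j = ∑ k ∈ Finset.range l, A k i * A k j := by
  classical
  set M' : Matrix (Fin l) (Fin l) ℝ := Matrix.of fun i j => M i j with hM'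
  have hposM' : M'.PosSemidef := by
    refine Matrix.PosSemidef.of_dotProduct_mulVec_nonneg ?_ ?_
    · ext i j
      simp only [Matrix.conjTranspose_apply, Matrix.of_apply, star_trivial, hM']
      exact hsym j j.isLt i i.isLt
    · intro x
      have := hpsd (fun k => if h : k < l then x ⟨k, h⟩ else 0)
      have key : ∑ i ∈ Finset.range l, ∑ j ∈ Finset.range l,
          (if h : i < l then x ⟨i, h⟩ else 0) * (if h : j < l then x ⟨j, h⟩ else 0)
            * M i j
          = dotProduct (star x) (M'.mulVec x) := by
        simp only [dotProduct, Matrix.mulVec]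
        rw [← Fin.sum_univ_eq_sum_range (fun i => ∑ j ∈ Finset.range l,
          (if h : i < l then x ⟨i, h⟩ else 0) * (if h : j < l then x ⟨j, h⟩ else 0)
            * M i j)]
        refine Finset.sum_congr rfl fun i _ => ?_
        rw [← Fin.sum_univ_eq_sum_range (fun j =>
          (if h : (i : ℕ) < l then x ⟨i, h⟩ else 0) * (if h : j < l then x ⟨j, h⟩ else 0)
            * M i j)]
        rw [Finset.mul_sum]
        refine Finset.sum_congr rfl fun j _ => ?_
        simp only [dif_pos i.isLt, dif_pos j.isLt, Fin.eta, star_trivial,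
          Matrix.of_apply, hM']
        ring
      rw [key] at this
      exact this
  obtain ⟨B, hB⟩ : ∃ B : Matrix (Fin l) (Fin l) ℝ, M' = B.conjTranspose * B := by
    open scoped MatrixOrder in exact CStarAlgebra.nonneg_iff_eq_star_mul_self.mp hposM'.nonneg
  refine ⟨fun k i => if hk : k < l then (if hi : i < l then B ⟨k, hk⟩ ⟨i, hi⟩ else 0)
    else 0, fun i hi j hj => ?_⟩
  have : M i j = (B.conjTranspose * B) ⟨i, hi⟩ ⟨j, hj⟩ := by
    rw [← hB]; rfl
  rw [this, Matrix.mul_apply]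
  rw [← Fin.sum_univ_eq_sum_range (fun k =>
    (if hk : k < l then (if hi' : i < l then B ⟨k, hk⟩ ⟨i, hi'⟩ else 0) else 0) *
    (if hk : k < l then (if hj' : j < l then B ⟨k, hk⟩ ⟨j, hj'⟩ else 0) else 0))]
  refine Finset.sum_congr rfl fun k _ => ?_
  simp only [dif_pos k.isLt, dif_pos hi, dif_pos hj, Fin.eta,
    Matrix.conjTranspose_apply, star_trivial]

/-- Schur product theorem, iterated: entrywise powers of a PSD kernel are PSD. -/
lemma psd_pow (l : ℕ) (M : ℕ → ℕ → ℝ)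
    (hsym : ∀ i < l, ∀ j < l, M i j = M j i)
    (hpsd : ∀ c : ℕ → ℝ,
      0 ≤ ∑ i ∈ Finset.range l, ∑ j ∈ Finset.range l, c i * c j * M i j)
    (n : ℕ) (c : ℕ → ℝ) :
    0 ≤ ∑ i ∈ Finset.range l, ∑ j ∈ Finset.range l, c i * c j * M i j ^ n := by
  obtain ⟨A, hA⟩ := psd_decomp l M hsym hpsd
  induction n generalizing c with
  | zero =>
    simp only [pow_zero, mul_one]
    have : ∑ i ∈ Finset.range l, ∑ j ∈ Finset.range l, c i * c j
        = (∑ i ∈ Finset.range l, c i) ^ 2 := by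
      rw [sq, Finset.sum_mul_sum]
    rw [this]
    positivity
  | succ n ih =>
    have key : ∑ i ∈ Finset.range l, ∑ j ∈ Finset.range l, c i * c j * M i j ^ (n + 1)
        = ∑ k ∈ Finset.range l, ∑ i ∈ Finset.range l, ∑ j ∈ Finset.range l,
          (c i * A k i) * (c j * A k j) * M i j ^ n := by
      have step : ∀ i ∈ Finset.range l, ∀ j ∈ Finset.range l,
          c i * c j * M i j ^ (n + 1)
          = ∑ k ∈ Finset.range l, (c i * A k i) * (c j * A k j) * M i j ^ n := by
        intro i hi j hj
        rw [pow_succ', hA i (Finset.mem_range.mp hi) j (Finset.mem_range.mp hj),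
          Finset.sum_mul, Finset.mul_sum]
        refine Finset.sum_congr rfl fun k _ => ?_
        ring
      calc ∑ i ∈ Finset.range l, ∑ j ∈ Finset.range l, c i * c j * M i j ^ (n + 1)
          = ∑ i ∈ Finset.range l, ∑ j ∈ Finset.range l, ∑ k ∈ Finset.range l,
            (c i * A k i) * (c j * A k j) * M i j ^ n :=
            Finset.sum_congr rfl fun i hi => Finset.sum_congr rfl fun j hj => step i hi j hj
        _ = ∑ i ∈ Finset.range l, ∑ k ∈ Finset.range l, ∑ j ∈ Finset.range l,
            (c i * A k i) * (c j * A k j) * M i j ^ n :=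
            Finset.sum_congr rfl fun i _ => Finset.sum_comm
        _ = ∑ k ∈ Finset.range l, ∑ i ∈ Finset.range l, ∑ j ∈ Finset.range l,
            (c i * A k i) * (c j * A k j) * M i j ^ n := Finset.sum_comm
    rw [key]
    exact Finset.sum_nonneg fun k _ => ih (fun i => c i * A k i)

/-- The log series identity: for `0 ≤ r < 1`,
`∑ (2/n) rⁿ cos(n t) = -log (1 - 2 r cos t + r²)`. -/
lemma hasSum_neg_log (r t : ℝ) (h0 : 0 ≤ r) (h1 : r < 1) :
    HasSum (fun n : ℕ => 2 * (r ^ n * Real.cos (n * t) / n))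
      (-Real.log (1 - 2 * r * Real.cos t + r ^ 2)) := by
  set z : ℂ := (r : ℂ) * Complex.exp (t * Complex.I) with hz
  have hnorm : ‖z‖ < 1 := by
    rw [hz, norm_mul, Complex.norm_exp_ofReal_mul_I, mul_one, Complex.norm_real,
      Real.norm_eq_abs, abs_of_nonneg h0]
    exact h1
  have hs := Complex.hasSum_re (Complex.hasSum_taylorSeries_neg_log hnorm)
  have hterm : ∀ n : ℕ, (z ^ n / (n : ℂ)).re = r ^ n * Real.cos (n * t) / n := by
    intro n
    have hzn : z ^ n = ((r ^ n : ℝ) : ℂ) * Complex.exp ((n * t : ℝ) * Complex.I) := by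
      rw [hz, mul_pow, ← Complex.exp_nat_mul]
      push_cast
      ring_nf
    rw [show ((n : ℂ)) = ((n : ℝ) : ℂ) by push_cast; ring, Complex.div_ofReal_re,
      hzn, Complex.re_ofReal_mul, Complex.exp_ofReal_mul_I_re]
  have hval : (-Complex.log (1 - z)).re
      = -(1 / 2) * Real.log (1 - 2 * r * Real.cos t + r ^ 2) := by
    have habs : ‖1 - z‖ ^ 2 = 1 - 2 * r * Real.cos t + r ^ 2 := by
      rw [← Complex.normSq_eq_norm_sq, Complex.normSq_sub, Complex.normSq_one]
      have hre : z.re = r * Real.cos t := by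
        rw [hz, Complex.re_ofReal_mul, Complex.exp_ofReal_mul_I_re]
      have hsq : Complex.normSq z = r ^ 2 := by
        rw [← Complex.sq_norm, hz, norm_mul,
          Complex.norm_exp_ofReal_mul_I, mul_one, Complex.norm_real, Real.norm_eq_abs,
          abs_of_nonneg h0]
      rw [one_mul, Complex.conj_re, hre, hsq]
      ring
    have habs_pos : 0 < ‖1 - z‖ := by
      have hzne : (1 : ℂ) - z ≠ 0 := by
        intro h
        have : z = 1 := by linear_combination -h
        rw [this] at hnorm
        simp at hnorm
      exact norm_pos_iff.mpr hzne
    rw [Complex.neg_re, Complex.log_re]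
    rw [show Real.log ‖1 - z‖
        = (1 / 2) * Real.log (‖1 - z‖ ^ 2) by
      rw [Real.log_pow]; push_cast; ring]
    rw [habs]
    ring
  have := hs
  rw [hval] at this
  have h2 := this.mul_left 2
  have e : (fun n : ℕ => 2 * (r ^ n * Real.cos (n * t) / n))
      = fun i : ℕ => 2 * (z ^ i / (i : ℂ)).re := by
    funext n
    rw [hterm n]
  rw [e, show -Real.log (1 - 2 * r * Real.cos t + r ^ 2)
      = 2 * (-(1 / 2) * Real.log (1 - 2 * r * Real.cos t + r ^ 2)) by ring]
  exact h2

theorem stmt_12 (b : ℝ → ℝ → ℝ)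
    (hsymm : ∀ φ₁ ∈ Set.Icc (0:ℝ) π, ∀ φ₂ ∈ Set.Icc (0:ℝ) π, b φ₁ φ₂ = b φ₂ φ₁)
    (hpsd : ∀ l : ℕ, ∀ φ c : ℕ → ℝ, (∀ i, φ i ∈ Set.Icc (0:ℝ) π) →
      0 ≤ ∑ i ∈ Finset.range l, ∑ j ∈ Finset.range l, c i * c j * b (φ i) (φ j))
    (hnonneg : ∀ φ₁ ∈ Set.Icc (0:ℝ) π, ∀ φ₂ ∈ Set.Icc (0:ℝ) π, 0 ≤ b φ₁ φ₂)
    (hlt : ∀ φ₁ ∈ Set.Icc (0:ℝ) π, ∀ φ₂ ∈ Set.Icc (0:ℝ) π, b φ₁ φ₂ < 1) :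
    ∀ l : ℕ, ∀ φ θ a : ℕ → ℝ, (∀ i, φ i ∈ Set.Icc (0:ℝ) π) →
      0 ≤ ∑ i ∈ Finset.range l, ∑ j ∈ Finset.range l,
        a i * a j * (-Real.log (1 - 2 * b (φ i) (φ j) * Real.cos (θ i - θ j)
          + (b (φ i) (φ j)) ^ 2)) := by
  intro l φ θ a hφ
  set M : ℕ → ℕ → ℝ := fun i j => b (φ i) (φ j) with hM
  have hMsym : ∀ i < l, ∀ j < l, M i j = M j i :=
    fun i _ j _ => hsymm (φ i) (hφ i) (φ j) (hφ j)
  have hMpsd : ∀ c : ℕ → ℝ,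
      0 ≤ ∑ i ∈ Finset.range l, ∑ j ∈ Finset.range l, c i * c j * M i j :=
    fun c => hpsd l φ c hφ
  -- termwise has-sum for each pair
  have hpair : ∀ i j : ℕ, HasSum
      (fun n : ℕ => a i * a j * (2 * (M i j ^ n * Real.cos (n * (θ i - θ j)) / n)))
      (a i * a j * (-Real.log (1 - 2 * M i j * Real.cos (θ i - θ j) + M i j ^ 2))) :=
    fun i j => (hasSum_neg_log (M i j) (θ i - θ j)
      (hnonneg (φ i) (hφ i) (φ j) (hφ j)) (hlt (φ i) (hφ i) (φ j) (hφ j))).mul_left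
        (a i * a j)
  -- sum the has-sums over the finite index sets
  have hsum : HasSum
      (fun n : ℕ => ∑ i ∈ Finset.range l, ∑ j ∈ Finset.range l,
        a i * a j * (2 * (M i j ^ n * Real.cos (n * (θ i - θ j)) / n)))
      (∑ i ∈ Finset.range l, ∑ j ∈ Finset.range l,
        a i * a j * (-Real.log (1 - 2 * M i j * Real.cos (θ i - θ j) + M i j ^ 2))) := by
    exact hasSum_sum fun i _ => hasSum_sum fun j _ => hpair i j
  refine hsum.nonneg fun n => ?_
  -- each term of the series is nonneg by Schur
  have expand : ∑ i ∈ Finset.range l, ∑ j ∈ Finset.range l,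
      a i * a j * (2 * (M i j ^ n * Real.cos (n * (θ i - θ j)) / n))
      = (2 / n) * ((∑ i ∈ Finset.range l, ∑ j ∈ Finset.range l,
          (a i * Real.cos (n * θ i)) * (a j * Real.cos (n * θ j)) * M i j ^ n)
        + (∑ i ∈ Finset.range l, ∑ j ∈ Finset.range l,
          (a i * Real.sin (n * θ i)) * (a j * Real.sin (n * θ j)) * M i j ^ n)) := by
    rw [← Finset.sum_add_distrib, Finset.mul_sum]
    refine Finset.sum_congr rfl fun i _ => ?_
    rw [← Finset.sum_add_distrib, Finset.mul_sum]
    refine Finset.sum_congr rfl fun j _ => ?_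
    have : Real.cos (n * (θ i - θ j))
        = Real.cos (n * θ i) * Real.cos (n * θ j)
          + Real.sin (n * θ i) * Real.sin (n * θ j) := by
      rw [mul_sub, Real.cos_sub]
    rw [this]
    ring
  rw [expand]
  have h1 := psd_pow l M hMsym hMpsd n (fun i => a i * Real.cos (n * θ i))
  have h2 := psd_pow l M hMsym hMpsd n (fun i => a i * Real.sin (n * θ i))
  have h3 : (0:ℝ) ≤ 2 / n := by positivity
  exact mul_nonneg h3 (by linarith)
end

section
/- Let m, l ∈ ℕ, and for each natural number n let B_n and A_n be functions from [0, π] × [0, π] × ℝ to m × m real matrices. Suppose that for every n, every choice of φ₁,…,φ_l ∈ [0, π], t₁,…,t_l ∈ ℝ, and vectors u₁,…,u_l, v₁,…,v_l ∈ ℝ^m, ∑_{i,j} ( uᵢᵀ B_n(φ_i, φ_j, t_i − t_j) u_j + vᵢᵀ B_n(φ_i, φ_j, t_i − t_j) v_j + uᵢᵀ A_n(φ_i, φ_j, t_i − t_j) v_j − vᵢᵀ A_n(φ_i, φ_j, t_i − t_j) u_j ) ≥ 0. Then for every N ∈ ℕ, all θ₁,…,θ_l ∈ ℝ, all t₁,…,t_l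 ∈ ℝ, all φ₁,…,φ_l ∈ [0, π], and all w₁,…,w_l ∈ ℝ^m, ∑_{i,j} wᵢᵀ [ ∑_{n=0}^N ( B_n(φ_i, φ_j, t_i − t_j)·cos(n(θ_i − θ_j)) + A_n(φ_i, φ_j, t_i − t_j)·sin(n(θ_i − θ_j)) ) ] w_j ≥ 0. -/
open Real Finset Matrix

lemma stmt_14_sum_mulVec {m : ℕ} (s : Finset ℕ) (M : ℕ → Matrix (Fin m) (Fin m) ℝ)
    (v : Fin m → ℝ) : (∑ n ∈ s, M n) *ᵥ v = ∑ n ∈ s, M n *ᵥ v := by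
  induction s using Finset.cons_induction with
  | empty => simp [Matrix.zero_mulVec]
  | cons a s ha ih => simp [Finset.sum_insert ha, Matrix.add_mulVec, ih]

lemma stmt_14_dotProduct_sum {m : ℕ} (s : Finset ℕ) (v : Fin m → ℝ)
    (f : ℕ → Fin m → ℝ) : v ⬝ᵥ (∑ n ∈ s, f n) = ∑ n ∈ s, v ⬝ᵥ f n := by
  induction s using Finset.cons_induction with
  | empty => simp
  | cons a s ha ih => simp [Finset.sum_insert ha, dotProduct_add, ih]

theorem stmt_14 (m l : ℕ)
    (B A : ℕ → ℝ → ℝ → ℝ → Matrix (Fin m) (Fin m) ℝ)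
    (hyp : ∀ n : ℕ, ∀ φ t : ℕ → ℝ, ∀ u v : ℕ → (Fin m → ℝ),
      (∀ i, φ i ∈ Set.Icc (0:ℝ) π) →
      0 ≤ ∑ i ∈ Finset.range l, ∑ j ∈ Finset.range l,
        (u i ⬝ᵥ (B n (φ i) (φ j) (t i - t j) *ᵥ u j)
          + v i ⬝ᵥ (B n (φ i) (φ j) (t i - t j) *ᵥ v j)
          + u i ⬝ᵥ (A n (φ i) (φ j) (t i - t j) *ᵥ v j)
          - v i ⬝ᵥ (A n (φ i) (φ j) (t i - t j) *ᵥ u j))) :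
    ∀ N : ℕ, ∀ θ t φ : ℕ → ℝ, ∀ w : ℕ → (Fin m → ℝ),
      (∀ i, φ i ∈ Set.Icc (0:ℝ) π) →
      0 ≤ ∑ i ∈ Finset.range l, ∑ j ∈ Finset.range l,
        w i ⬝ᵥ ((∑ n ∈ Finset.range (N + 1),
          (Real.cos (n * (θ i - θ j)) • B n (φ i) (φ j) (t i - t j)
            + Real.sin (n * (θ i - θ j)) • A n (φ i) (φ j) (t i - t j))) *ᵥ w j) := by
  intro N θ t φ w hφ
  have hswap : ∑ i ∈ Finset.range l, ∑ j ∈ Finset.range l,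
        w i ⬝ᵥ ((∑ n ∈ Finset.range (N + 1),
          (Real.cos (n * (θ i - θ j)) • B n (φ i) (φ j) (t i - t j)
            + Real.sin (n * (θ i - θ j)) • A n (φ i) (φ j) (t i - t j))) *ᵥ w j)
      = ∑ n ∈ Finset.range (N + 1), ∑ i ∈ Finset.range l, ∑ j ∈ Finset.range l,
        w i ⬝ᵥ ((Real.cos (n * (θ i - θ j)) • B n (φ i) (φ j) (t i - t j)
            + Real.sin (n * (θ i - θ j)) • A n (φ i) (φ j) (t i - t j)) *ᵥ w j) := by
    calc ∑ i ∈ Finset.range l, ∑ j ∈ Finset.range l,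
        w i ⬝ᵥ ((∑ n ∈ Finset.range (N + 1),
          (Real.cos (n * (θ i - θ j)) • B n (φ i) (φ j) (t i - t j)
            + Real.sin (n * (θ i - θ j)) • A n (φ i) (φ j) (t i - t j))) *ᵥ w j)
        = ∑ i ∈ Finset.range l, ∑ j ∈ Finset.range l, ∑ n ∈ Finset.range (N + 1),
            w i ⬝ᵥ ((Real.cos (n * (θ i - θ j)) • B n (φ i) (φ j) (t i - t j)
              + Real.sin (n * (θ i - θ j)) • A n (φ i) (φ j) (t i - t j)) *ᵥ w j) := by
          refine Finset.sum_congr rfl fun i _ => Finset.sum_congr rfl fun j _ => ?_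
          rw [stmt_14_sum_mulVec, stmt_14_dotProduct_sum]
      _ = ∑ i ∈ Finset.range l, ∑ n ∈ Finset.range (N + 1), ∑ j ∈ Finset.range l,
            w i ⬝ᵥ ((Real.cos (n * (θ i - θ j)) • B n (φ i) (φ j) (t i - t j)
              + Real.sin (n * (θ i - θ j)) • A n (φ i) (φ j) (t i - t j)) *ᵥ w j) :=
          Finset.sum_congr rfl fun i _ => Finset.sum_comm
      _ = _ := Finset.sum_comm
  rw [hswap]
  refine Finset.sum_nonneg fun n _ => ?_
  have h := hyp n φ t (fun i => Real.cos (n * θ i) • w i)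
      (fun i => (- Real.sin (n * θ i)) • w i) hφ
  refine le_trans h (le_of_eq ?_)
  refine Finset.sum_congr rfl fun i _ => Finset.sum_congr rfl fun j _ => ?_
  simp only [Matrix.add_mulVec, Matrix.smul_mulVec, Matrix.mulVec_smul,
    dotProduct_add, dotProduct_smul, smul_dotProduct, smul_eq_mul, mul_sub,
    Real.cos_sub, Real.sin_sub]
  ring
end
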